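/- Let B₀ ∈ ℝ^{n×n} and A₀ ∈ ℝ^{m×m} be symmetric positive definite, with c₁,…,c_n the columns of B₀^{1/2} and d₁,…,d_m the columns of A₀^{1/2}. For w ∈ ℝ^{mn} let 𝔻₀(w) be the mn×mn block-diagonal matrix whose k-th n×n block has entries 𝔻₀^(k)_{ij}(w) = wᵀ((c_i c_jᵀ) ⊗ (d_k d_kᵀ))w. Then: (i) 𝔻₀(w) is positive semidefinite for every w ∈ ℝ^{mn}; (ii) its nuclear norm satisfies ‖𝔻₀(w)‖_* = wᵀ (B₀ ⊗ A₀) w; and (iii) sup over w ∈ S^{mn−1} of ‖𝔻₀(w)‖_* equals ‖B₀‖₂ ‖A₀‖₂. -/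

import Mathlib

open MeasureTheory Matrix Finset
open scoped Kronecker

/-- Euclidean (ℓ₂) norm of a vector. -/
noncomputable def e2 {ι : Type*} [Fintype ι] (v : ι → ℝ) : ℝ :=
  Real.sqrt (∑ i, v i ^ 2)

/-- Operator (spectral) norm of a matrix. -/
noncomputable def opNorm {α β : Type*} [Fintype α] [Fintype β]
    (M : Matrix α β ℝ) : ℝ :=
  sSup {r | ∃ q : β → ℝ, e2 q ≤ 1 ∧ r = e2 (M.mulVec q)}

/-- Nuclear (trace) norm of a real square matrix: `‖M‖_* = tr √(MᵀM)`. -/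
noncomputable def nucNorm {ι : Type*} [Fintype ι] [DecidableEq ι]
    (M : Matrix ι ι ℝ) : ℝ :=
  ((Matrix.posSemidef_conjTranspose_mul_self M).1.eigenvectorUnitary.1 *
    Matrix.diagonal ((RCLike.ofReal : ℝ → ℝ) ∘ Real.sqrt ∘
      (Matrix.posSemidef_conjTranspose_mul_self M).1.eigenvalues) *
    (star (Matrix.posSemidef_conjTranspose_mul_self M).1.eigenvectorUnitary :
      Matrix ι ι ℝ)).trace

/-- The block-diagonal matrix `𝔻₀(w)` with `k`-th block
`(wᵀ((c_i c_jᵀ) ⊗ (d_k d_kᵀ))w)_{ij}`. -/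
noncomputable def D0 {n m : ℕ} (c : Fin n → Fin n → ℝ) (d : Fin m → Fin m → ℝ)
    (w : Fin n × Fin m → ℝ) :
    Matrix (Fin n × Fin m) (Fin n × Fin m) ℝ :=
  Matrix.blockDiagonal fun k => Matrix.of fun i j =>
    w ⬝ᵥ ((Matrix.vecMulVec (c i) (c j) ⊗ₖ Matrix.vecMulVec (d k) (d k)).mulVec w)

section basics
variable {ι : Type*} [Fintype ι]

lemma e2_nonneg (v : ι → ℝ) : 0 ≤ e2 v := Real.sqrt_nonneg _

lemma e2_sq (v : ι → ℝ) : e2 v ^ 2 = ∑ i, v i ^ 2 :=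
  Real.sq_sqrt (Finset.sum_nonneg fun i _ => sq_nonneg _)

lemma e2_eq_one_iff (v : ι → ℝ) : e2 v = 1 ↔ ∑ i, v i ^ 2 = 1 := by
  exact Real.sqrt_eq_one

lemma qf_expand2 {ι : Type*} [Fintype ι] (M : Matrix ι ι ℝ) (u v : ι → ℝ) :
    u ⬝ᵥ M.mulVec v = ∑ i, ∑ j, u i * M i j * v j := by
  simp [dotProduct, Matrix.mulVec, Finset.mul_sum, mul_assoc]

/-- quadratic form expansion -/
lemma qf_expand (M : Matrix ι ι ℝ) (w : ι → ℝ) :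
    w ⬝ᵥ M.mulVec w = ∑ i, ∑ j, w i * M i j * w j := by
  simp [dotProduct, Matrix.mulVec, Finset.mul_sum, mul_assoc]

lemma qf_nonneg {M : Matrix ι ι ℝ} (hM : M.PosSemidef) (w : ι → ℝ) :
    0 ≤ w ⬝ᵥ M.mulVec w := by
  simpa using hM.dotProduct_mulVec_nonneg w

end basics

section ray
variable {ι : Type*} [Fintype ι]

/-- The set of values of the quadratic form of `M` on the unit sphere. -/
def raySet (M : Matrix ι ι ℝ) : Set ℝ :=
  {x | ∃ w : ι → ℝ, e2 w = 1 ∧ x = w ⬝ᵥ M.mulVec w}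

lemma abs_le_one_of_e2_eq_one {w : ι → ℝ} (hw : e2 w = 1) (i : ι) : |w i| ≤ 1 := by
  have h1 : w i ^ 2 ≤ 1 := by
    rw [← (e2_eq_one_iff w).mp hw]
    exact Finset.single_le_sum (f := fun j => w j ^ 2) (fun j _ => sq_nonneg _) (mem_univ i)
  calc |w i| = Real.sqrt (w i ^ 2) := (Real.sqrt_sq_eq_abs _).symm
  _ ≤ Real.sqrt 1 := Real.sqrt_le_sqrt h1
  _ = 1 := Real.sqrt_one

lemma raySet_bddAbove (M : Matrix ι ι ℝ) : BddAbove (raySet M) := by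
  refine ⟨∑ i, ∑ j, |M i j|, ?_⟩
  rintro x ⟨w, hw, rfl⟩
  rw [qf_expand]
  refine Finset.sum_le_sum fun i _ => Finset.sum_le_sum fun j _ => ?_
  calc w i * M i j * w j ≤ |w i * M i j * w j| := le_abs_self _
  _ = |w i| * |M i j| * |w j| := by rw [abs_mul, abs_mul]
  _ ≤ |M i j| := by
      have h1 := abs_le_one_of_e2_eq_one hw i
      have h2 := abs_le_one_of_e2_eq_one hw j
      have := mul_le_mul (mul_le_mul h1 (le_refl |M i j|) (abs_nonneg _) zero_le_one) h2
        (abs_nonneg _) (by positivity)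
      linarith [this]

lemma mem_raySet_single [DecidableEq ι] (M : Matrix ι ι ℝ) (i0 : ι) :
    Pi.single i0 1 ⬝ᵥ M.mulVec (Pi.single i0 1) ∈ raySet M := by
  refine ⟨Pi.single i0 1, ?_, rfl⟩
  rw [e2_eq_one_iff]
  simp [Pi.single_apply, sq]

lemma raySet_nonempty [Nonempty ι] (M : Matrix ι ι ℝ) : (raySet M).Nonempty := by
  classical
  exact ⟨_, mem_raySet_single M (Classical.arbitrary ι)⟩

lemma ray_pos [Nonempty ι] {M : Matrix ι ι ℝ} (hM : M.PosDef) :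
    0 < sSup (raySet M) := by
  classical
  set i0 := Classical.arbitrary ι
  have hne : (Pi.single i0 1 : ι → ℝ) ≠ 0 := by
    intro h
    have := congrFun h i0
    simp at this
  have hpos : 0 < Pi.single i0 1 ⬝ᵥ M.mulVec (Pi.single i0 1) := by
    simpa using hM.dotProduct_mulVec_pos hne
  exact lt_of_lt_of_le hpos (le_csSup (raySet_bddAbove M) (mem_raySet_single M i0))

lemma ray_nonneg [Nonempty ι] {M : Matrix ι ι ℝ} (hM : M.PosDef) :
    0 ≤ sSup (raySet M) := (ray_pos hM).le

lemma qf_smul (M : Matrix ι ι ℝ) (c : ℝ) (w : ι → ℝ) :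
    (c • w) ⬝ᵥ M.mulVec (c • w) = c ^ 2 * (w ⬝ᵥ M.mulVec w) := by
  rw [Matrix.mulVec_smul, dotProduct_smul, smul_dotProduct]
  simp [smul_eq_mul]; ring

/-- Homogeneous form of the Rayleigh bound. -/
lemma qf_le_of_ub {M : Matrix ι ι ℝ} {R : ℝ}
    (hub : ∀ x ∈ raySet M, x ≤ R) (w : ι → ℝ) :
    w ⬝ᵥ M.mulVec w ≤ R * ∑ i, w i ^ 2 := by
  rcases eq_or_ne w 0 with rfl | hw
  · simp
  · have hs : 0 < ∑ i, w i ^ 2 := by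
      rcases Function.ne_iff.mp hw with ⟨i, hi⟩
      exact Finset.sum_pos' (fun j _ => sq_nonneg _)
        ⟨i, mem_univ i, by simpa using sq_pos_of_ne_zero hi⟩
    set t := e2 w with ht
    have htpos : 0 < t := Real.sqrt_pos.mpr hs
    have ht2 : t ^ 2 = ∑ i, w i ^ 2 := e2_sq w
    have hmem : (t⁻¹ • w) ⬝ᵥ M.mulVec (t⁻¹ • w) ∈ raySet M := by
      refine ⟨t⁻¹ • w, ?_, rfl⟩
      rw [e2_eq_one_iff]
      simp only [Pi.smul_apply, smul_eq_mul, mul_pow, ← Finset.mul_sum, ← ht2]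
      field_simp
    have := hub _ hmem
    rw [qf_smul] at this
    have h2 : w ⬝ᵥ M.mulVec w = t ^ 2 * ((t⁻¹) ^ 2 * (w ⬝ᵥ M.mulVec w)) := by
      field_simp
    rw [h2, ht2.symm]
    calc t ^ 2 * ((t⁻¹) ^ 2 * (w ⬝ᵥ M.mulVec w)) ≤ t ^ 2 * R := by
          have := sq_nonneg t
          nlinarith [sq_nonneg t]
    _ = R * t ^ 2 := by ring

lemma dot_le_e2_mul_e2 (a b : ι → ℝ) : a ⬝ᵥ b ≤ e2 a * e2 b := by
  have h := Finset.sum_mul_sq_le_sq_mul_sq Finset.univ a b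
  have h2 : a ⬝ᵥ b ≤ Real.sqrt ((a ⬝ᵥ b) ^ 2) := by
    rw [Real.sqrt_sq_eq_abs]; exact le_abs_self _
  calc a ⬝ᵥ b ≤ Real.sqrt ((a ⬝ᵥ b) ^ 2) := h2
  _ ≤ Real.sqrt ((∑ i, a i ^ 2) * ∑ i, b i ^ 2) := Real.sqrt_le_sqrt (by
      simpa [dotProduct] using h)
  _ = e2 a * e2 b := by
      rw [Real.sqrt_mul (Finset.sum_nonneg fun i _ => sq_nonneg _)]
      rfl

end ray

section opnorm
variable {ι : Type*} [Fintype ι]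

lemma e2_eq_zero_iff (v : ι → ℝ) : e2 v = 0 ↔ v = 0 := by
  unfold e2
  rw [Real.sqrt_eq_zero (Finset.sum_nonneg fun i _ => sq_nonneg _)]
  rw [Finset.sum_eq_zero_iff_of_nonneg (fun i _ => sq_nonneg _)]
  constructor
  · intro h; funext i; simpa using h i (mem_univ i)
  · intro h i _; simp [h]

lemma e2_smul_nonneg {c : ℝ} (hc : 0 ≤ c) (v : ι → ℝ) : e2 (c • v) = c * e2 v := by
  unfold e2
  simp only [Pi.smul_apply, smul_eq_mul, mul_pow, ← Finset.mul_sum]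
  rw [Real.sqrt_mul (by positivity), Real.sqrt_sq hc]

lemma dot_self_eq_e2_sq (v : ι → ℝ) : v ⬝ᵥ v = e2 v ^ 2 := by
  rw [e2_sq]; simp [dotProduct, sq]

lemma symm_entry {M : Matrix ι ι ℝ} (hM : M.IsHermitian) (i j : ι) : M j i = M i j := by
  have := congrFun (congrFun hM.eq i) j
  simpa [Matrix.conjTranspose_apply] using this

lemma symm_dot {M : Matrix ι ι ℝ} (hM : M.IsHermitian) (u v : ι → ℝ) :
    u ⬝ᵥ M.mulVec v = v ⬝ᵥ M.mulVec u := by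
  rw [qf_expand2, qf_expand2]
  rw [Finset.sum_comm]
  refine Finset.sum_congr rfl fun j _ => Finset.sum_congr rfl fun i _ => ?_
  rw [symm_entry hM i j]; ring

end opnorm

section opray
variable {ι : Type*} [Fintype ι] [Nonempty ι]

lemma opSet_bddAbove (M : Matrix ι ι ℝ) :
    BddAbove {r | ∃ q : ι → ℝ, e2 q ≤ 1 ∧ r = e2 (M.mulVec q)} := by
  refine ⟨Real.sqrt (∑ i, ∑ j, M i j ^ 2), ?_⟩
  rintro x ⟨q, hq, rfl⟩
  unfold e2
  apply Real.sqrt_le_sqrt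
  have key : ∀ i, (M.mulVec q i) ^ 2 ≤ (∑ j, M i j ^ 2) * ∑ j, q j ^ 2 := by
    intro i
    simpa [Matrix.mulVec, dotProduct] using
      Finset.sum_mul_sq_le_sq_mul_sq Finset.univ (fun j => M i j) q
  calc ∑ i, (M.mulVec q) i ^ 2 ≤ ∑ i, (∑ j, M i j ^ 2) * ∑ j, q j ^ 2 :=
        Finset.sum_le_sum fun i _ => key i
  _ ≤ ∑ i, (∑ j, M i j ^ 2) * 1 := by
      refine Finset.sum_le_sum fun i _ => ?_
      have h1 : ∑ j, q j ^ 2 ≤ 1 := by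
        have := e2_sq q
        nlinarith [e2_nonneg q]
      have h2 : 0 ≤ ∑ j, M i j ^ 2 := Finset.sum_nonneg fun j _ => sq_nonneg _
      nlinarith
  _ = ∑ i, ∑ j, M i j ^ 2 := by simp

lemma opSet_nonempty (M : Matrix ι ι ℝ) :
    Set.Nonempty {r | ∃ q : ι → ℝ, e2 q ≤ 1 ∧ r = e2 (M.mulVec q)} := by
  refine ⟨e2 (M.mulVec 0), 0, ?_, rfl⟩
  have : e2 (0 : ι → ℝ) = 0 := by rw [e2_eq_zero_iff]
  rw [this]; norm_num

/-- For a positive definite (symmetric) real matrix, the operator norm equals the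
supremum of the Rayleigh quotient on the unit sphere. -/
lemma opNorm_eq_ray {M : Matrix ι ι ℝ} (hM : M.PosDef) :
    opNorm M = sSup (raySet M) := by
  set R := sSup (raySet M) with hR
  have hub : ∀ x ∈ raySet M, x ≤ R := fun x hx => le_csSup (raySet_bddAbove M) hx
  have hR0 : 0 ≤ R := ray_nonneg hM
  -- key estimate : e2 (M.mulVec q) ≤ R * e2 q
  have key : ∀ q : ι → ℝ, e2 (M.mulVec q) ≤ R * e2 q := by
    intro q
    set v := M.mulVec q with hv
    set a := e2 q with ha
    set b := e2 v with hb
    rcases eq_or_lt_of_le (e2_nonneg v) with h0 | hbpos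
    · rw [hb, ← h0]; exact mul_nonneg hR0 (e2_nonneg q)
    rcases eq_or_lt_of_le (e2_nonneg q) with h0 | hapos
    · exfalso
      have : q = 0 := by rw [← e2_eq_zero_iff]; exact h0.symm
      rw [this] at hv
      simp [Matrix.mulVec_zero] at hv
      rw [hv] at hbpos
      have : e2 (0 : ι → ℝ) = 0 := by rw [e2_eq_zero_iff]
      rw [this] at hbpos
      exact lt_irrefl 0 hbpos
    -- polarization
    set y := (a / b) • v with hy
    have hab : 0 ≤ a / b := div_nonneg hapos.le hbpos.le
    have hey : e2 y = a := by
      rw [hy, e2_smul_nonneg hab, ← hb, div_mul_cancel₀]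
      exact ne_of_gt hbpos
    have hvy : v ⬝ᵥ y = a * b := by
      rw [hy, dotProduct_smul, smul_eq_mul, dot_self_eq_e2_sq, ← hb]
      field_simp
    have hsym := symm_dot hM.1.symm.symm (M := M)
    -- Q(q+y) - Q(q-y) = 4 ⟨Mq, y⟩ ; Q(q - y) ≥ 0
    have hQm : 0 ≤ (q - y) ⬝ᵥ M.mulVec (q - y) := qf_nonneg hM.posSemidef _
    have hquad : (q + y) ⬝ᵥ M.mulVec (q + y)
        = q ⬝ᵥ M.mulVec q + 2 * (y ⬝ᵥ M.mulVec q) + y ⬝ᵥ M.mulVec y := by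
      simp only [Matrix.mulVec_add, dotProduct_add, add_dotProduct]
      rw [symm_dot hM.1 q y]; ring
    have hquadm : (q - y) ⬝ᵥ M.mulVec (q - y)
        = q ⬝ᵥ M.mulVec q - 2 * (y ⬝ᵥ M.mulVec q) + y ⬝ᵥ M.mulVec y := by
      simp only [Matrix.mulVec_sub, dotProduct_sub, sub_dotProduct]
      rw [symm_dot hM.1 q y]; ring
    have hMqy : y ⬝ᵥ M.mulVec q = a * b := by
      rw [dotProduct_comm, ← hv]; exact hvy
    -- bound Q(q+y) ≤ R * e2(q+y)^2 ≤ R * (2a)^2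
    have hsum : ∑ i, (q + y) i ^ 2 ≤ 4 * a ^ 2 := by
      have hqy : q ⬝ᵥ y ≤ a * a := by
        calc q ⬝ᵥ y ≤ e2 q * e2 y := dot_le_e2_mul_e2 q y
        _ = a * a := by rw [← ha, hey]
      have hexp : ∑ i, (q + y) i ^ 2 = (∑ i, q i ^ 2) + 2 * (q ⬝ᵥ y) + ∑ i, y i ^ 2 := by
        simp only [Pi.add_apply, dotProduct, Finset.mul_sum]
        rw [← Finset.sum_add_distrib, ← Finset.sum_add_distrib]
        exact Finset.sum_congr rfl fun i _ => by ring
      rw [hexp, ← e2_sq, ← e2_sq, ← ha, hey]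
      nlinarith
    have hQp : (q + y) ⬝ᵥ M.mulVec (q + y) ≤ R * (4 * a ^ 2) := by
      calc (q + y) ⬝ᵥ M.mulVec (q + y) ≤ R * ∑ i, (q + y) i ^ 2 := qf_le_of_ub hub _
      _ ≤ R * (4 * a ^ 2) := by nlinarith
    have h4ab : 4 * (a * b) ≤ R * (4 * a ^ 2) := by
      have := hquad
      nlinarith [hQm, hquadm, hquad, hQp]
    -- conclude b ≤ R * a
    nlinarith [hapos, hbpos]
  -- now both inequalities
  apply le_antisymm
  · apply csSup_le (opSet_nonempty M)
    rintro x ⟨q, hq, rfl⟩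
    calc e2 (M.mulVec q) ≤ R * e2 q := key q
    _ ≤ R * 1 := by nlinarith [e2_nonneg q]
    _ = R := mul_one R
  · apply csSup_le (raySet_nonempty M)
    rintro x ⟨w, hw, rfl⟩
    have h1 : w ⬝ᵥ M.mulVec w ≤ e2 (M.mulVec w) := by
      calc w ⬝ᵥ M.mulVec w ≤ e2 w * e2 (M.mulVec w) := dot_le_e2_mul_e2 _ _
      _ = e2 (M.mulVec w) := by rw [hw, one_mul]
    refine le_trans h1 (le_csSup (opSet_bddAbove M) ⟨w, le_of_eq hw, rfl⟩)

end opray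

section kron
variable {ι κ : Type*} [Fintype ι] [Fintype κ] [DecidableEq ι] [DecidableEq κ]

lemma kron_psd {M : Matrix ι ι ℝ} {N : Matrix κ κ ℝ}
    (hM : M.PosSemidef) (hN : N.PosSemidef) : (M ⊗ₖ N).PosSemidef := by
  obtain ⟨P, hP⟩ : ∃ P : Matrix ι ι ℝ, M = Pᴴ * P :=
    by open scoped MatrixOrder in
      obtain ⟨a, ha⟩ := CStarAlgebra.nonneg_iff_eq_star_mul_self.mp hM.nonneg
      exact ⟨a, by rw [ha, star_eq_conjTranspose]⟩
  obtain ⟨Q, hQ⟩ : ∃ Q : Matrix κ κ ℝ, N = Qᴴ * Q :=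
    by open scoped MatrixOrder in
      obtain ⟨a, ha⟩ := CStarAlgebra.nonneg_iff_eq_star_mul_self.mp hN.nonneg
      exact ⟨a, by rw [ha, star_eq_conjTranspose]⟩
  have : M ⊗ₖ N = (P ⊗ₖ Q)ᴴ * (P ⊗ₖ Q) := by
    rw [hP, hQ, Matrix.mul_kronecker_mul]
    congr 1
  rw [this]
  exact Matrix.posSemidef_conjTranspose_mul_self _

lemma e2_prod (b : ι → ℝ) (a : κ → ℝ) :
    e2 (fun p : ι × κ => b p.1 * a p.2) = e2 b * e2 a := by
  unfold e2
  rw [← Real.sqrt_mul (Finset.sum_nonneg fun i _ => sq_nonneg _)]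
  congr 1
  rw [Fintype.sum_prod_type, Finset.sum_mul_sum]
  exact Finset.sum_congr rfl fun i _ => Finset.sum_congr rfl fun k _ => by ring

lemma kron_qf_prod (M : Matrix ι ι ℝ) (N : Matrix κ κ ℝ) (b : ι → ℝ) (a : κ → ℝ) :
    (fun p : ι × κ => b p.1 * a p.2) ⬝ᵥ
      (M ⊗ₖ N).mulVec (fun p : ι × κ => b p.1 * a p.2)
    = (b ⬝ᵥ M.mulVec b) * (a ⬝ᵥ N.mulVec a) := by
  have hL : (fun p : ι × κ => b p.1 * a p.2) ⬝ᵥ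
      (M ⊗ₖ N).mulVec (fun p : ι × κ => b p.1 * a p.2)
      = ∑ i, ∑ k, ∑ j, ∑ l, (b i * a k) * (M i j * N k l) * (b j * a l) := by
    rw [qf_expand2, Fintype.sum_prod_type]
    refine Finset.sum_congr rfl fun i _ => Finset.sum_congr rfl fun k _ => ?_
    rw [Fintype.sum_prod_type]
    rfl
  have hR : (b ⬝ᵥ M.mulVec b) * (a ⬝ᵥ N.mulVec a)
      = ∑ i, ∑ k, ∑ j, ∑ l, (b i * a k) * (M i j * N k l) * (b j * a l) := by
    rw [qf_expand, qf_expand, Finset.sum_mul_sum]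
    refine Finset.sum_congr rfl fun i _ => Finset.sum_congr rfl fun k _ => ?_
    rw [Finset.sum_mul_sum]
    exact Finset.sum_congr rfl fun j _ => Finset.sum_congr rfl fun l _ => by ring
  rw [hL, hR]

lemma one_kron_qf (N : Matrix κ κ ℝ) (w : ι × κ → ℝ) :
    w ⬝ᵥ ((1 : Matrix ι ι ℝ) ⊗ₖ N).mulVec w
      = ∑ i, (fun k => w (i,k)) ⬝ᵥ N.mulVec (fun k => w (i,k)) := by
  rw [qf_expand2, Fintype.sum_prod_type]
  refine Finset.sum_congr rfl fun i _ => ?_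
  rw [qf_expand]
  refine Finset.sum_congr rfl fun k _ => ?_
  rw [Fintype.sum_prod_type, Finset.sum_comm]
  refine Finset.sum_congr rfl fun l _ => ?_
  simp [Matrix.kroneckerMap_apply, Matrix.one_apply, ite_mul, mul_ite]

end kron

section raykron
variable {ι κ : Type*} [Fintype ι] [Fintype κ] [DecidableEq ι] [DecidableEq κ]
  [Nonempty ι] [Nonempty κ]

lemma shift_psd {M : Matrix ι ι ℝ} (hM : M.PosDef) {R : ℝ}
    (hub : ∀ x ∈ raySet M, x ≤ R) :
    (R • (1 : Matrix ι ι ℝ) - M).PosSemidef := by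
  refine Matrix.PosSemidef.of_dotProduct_mulVec_nonneg ?_ ?_
  · have h1 : (R • (1 : Matrix ι ι ℝ)).IsHermitian := by
      ext p q
      simp [Matrix.conjTranspose_apply, Matrix.one_apply]
      split <;> simp_all [eq_comm]
    exact h1.sub hM.1
  · intro x
    have hx : x ⬝ᵥ (R • (1 : Matrix ι ι ℝ) - M).mulVec x
        = R * ∑ i, x i ^ 2 - x ⬝ᵥ M.mulVec x := by
      rw [Matrix.sub_mulVec, dotProduct_sub]
      congr 1
      rw [Matrix.smul_mulVec, Matrix.one_mulVec, dotProduct_smul, smul_eq_mul,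
        dot_self_eq_e2_sq, e2_sq]
    have := qf_le_of_ub hub x
    simp only [star_trivial]
    rw [hx]
    linarith
lemma kron_sub_expand (M : Matrix ι ι ℝ) (N : Matrix κ κ ℝ) (R : ℝ) :
    (R • (1 : Matrix ι ι ℝ) - M) ⊗ₖ N
      = R • ((1 : Matrix ι ι ℝ) ⊗ₖ N) - M ⊗ₖ N := by
  ext p q
  simp [Matrix.kroneckerMap_apply, Matrix.sub_apply, Matrix.smul_apply, sub_mul, smul_eq_mul,
    mul_assoc]

lemma ray_kron {M : Matrix ι ι ℝ} {N : Matrix κ κ ℝ}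
    (hM : M.PosDef) (hN : N.PosDef) :
    sSup (raySet (M ⊗ₖ N)) = sSup (raySet M) * sSup (raySet N) := by
  set RM := sSup (raySet M)
  set RN := sSup (raySet N)
  have hubM : ∀ x ∈ raySet M, x ≤ RM := fun x hx => le_csSup (raySet_bddAbove M) hx
  have hubN : ∀ x ∈ raySet N, x ≤ RN := fun x hx => le_csSup (raySet_bddAbove N) hx
  have hRM : 0 < RM := ray_pos hM
  have hRN : 0 < RN := ray_pos hN
  apply le_antisymm
  · apply csSup_le (raySet_nonempty _)
    rintro x ⟨w, hw, rfl⟩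
    -- step 1 : w ⬝ (M⊗N) w ≤ RM * (w ⬝ (1⊗N) w)
    have h1 : w ⬝ᵥ (M ⊗ₖ N).mulVec w ≤ RM * (w ⬝ᵥ ((1 : Matrix ι ι ℝ) ⊗ₖ N).mulVec w) := by
      have hpsd := kron_psd (shift_psd hM hubM) hN.posSemidef
      have h0 := qf_nonneg hpsd w
      rw [kron_sub_expand, Matrix.sub_mulVec, dotProduct_sub,
        Matrix.smul_mulVec, dotProduct_smul, smul_eq_mul] at h0
      linarith
    -- step 2 : w ⬝ (1⊗N) w ≤ RN
    have h2 : w ⬝ᵥ ((1 : Matrix ι ι ℝ) ⊗ₖ N).mulVec w ≤ RN := by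
      rw [one_kron_qf]
      calc ∑ i, (fun k => w (i,k)) ⬝ᵥ N.mulVec (fun k => w (i,k))
          ≤ ∑ i, RN * ∑ k, w (i,k) ^ 2 :=
            Finset.sum_le_sum fun i _ => qf_le_of_ub hubN _
      _ = RN * ∑ i, ∑ k, w (i,k) ^ 2 := by rw [Finset.mul_sum]
      _ = RN * ∑ p : ι × κ, w p ^ 2 := by rw [Fintype.sum_prod_type]
      _ = RN := by rw [(e2_eq_one_iff w).mp hw, mul_one]
    calc w ⬝ᵥ (M ⊗ₖ N).mulVec w ≤ RM * (w ⬝ᵥ ((1 : Matrix ι ι ℝ) ⊗ₖ N).mulVec w) := h1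
    _ ≤ RM * RN := by nlinarith
  · -- products of elements are elements
    have hprod : ∀ xb ∈ raySet M, ∀ xa ∈ raySet N, xb * xa ≤ sSup (raySet (M ⊗ₖ N)) := by
      rintro _ ⟨b, hb, rfl⟩ _ ⟨a, ha, rfl⟩
      refine le_csSup (raySet_bddAbove _) ⟨fun p : ι × κ => b p.1 * a p.2, ?_, ?_⟩
      · rw [e2_prod, hb, ha, mul_one]
      · rw [kron_qf_prod]
    set RK := sSup (raySet (M ⊗ₖ N)) with hRK
    have hRK0 : 0 ≤ RK := by
      obtain ⟨x, hx⟩ := raySet_nonempty (M ⊗ₖ N)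
      obtain ⟨w, hw, rfl⟩ := hx
      exact le_trans (qf_nonneg (kron_psd hM.posSemidef hN.posSemidef) w)
        (le_csSup (raySet_bddAbove _) ⟨w, hw, rfl⟩)
    -- first : ∀ xa ∈ raySet N, RM * xa ≤ RK
    have hstep : ∀ xa ∈ raySet N, RM * xa ≤ RK := by
      intro xa hxa
      have hxa0 : 0 ≤ xa := by
        obtain ⟨a, ha, rfl⟩ := hxa
        exact qf_nonneg hN.posSemidef a
      rcases eq_or_lt_of_le hxa0 with h0 | hpos
      · rw [← h0, mul_zero]; exact hRK0
      · have : RM ≤ RK / xa := by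
          apply csSup_le (raySet_nonempty M)
          intro xb hxb
          rw [le_div_iff₀ hpos]
          exact hprod _ hxb _ hxa
        calc RM * xa ≤ (RK / xa) * xa := by nlinarith
        _ = RK := by field_simp
    have : RN ≤ RK / RM := by
      apply csSup_le (raySet_nonempty N)
      intro xa hxa
      rw [le_div_iff₀ hRM, mul_comm]
      exact hstep _ hxa
    calc RM * RN ≤ RM * (RK / RM) := by nlinarith
    _ = RK := by field_simp

end raykron

section blockdiag
variable {ι κ : Type*} [Fintype ι] [Fintype κ] [DecidableEq ι] [DecidableEq κ]

lemma blockDiag_qf (f : κ → Matrix ι ι ℝ) (x : ι × κ → ℝ) :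
    x ⬝ᵥ (Matrix.blockDiagonal f).mulVec x
      = ∑ k, (fun i => x (i,k)) ⬝ᵥ (f k).mulVec (fun i => x (i,k)) := by
  rw [qf_expand2, Fintype.sum_prod_type, Finset.sum_comm]
  refine Finset.sum_congr rfl fun k _ => ?_
  rw [qf_expand]
  refine Finset.sum_congr rfl fun i _ => ?_
  rw [Fintype.sum_prod_type, Finset.sum_comm]
  simp [Matrix.blockDiagonal_apply, ite_mul, mul_ite]

lemma blockDiag_psd (f : κ → Matrix ι ι ℝ) (hf : ∀ k, (f k).PosSemidef) :
    (Matrix.blockDiagonal f).PosSemidef := by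
  refine Matrix.PosSemidef.of_dotProduct_mulVec_nonneg ?_ ?_
  · ext p q
    rcases p with ⟨i, k⟩; rcases q with ⟨j, l⟩
    simp only [Matrix.conjTranspose_apply, Matrix.blockDiagonal_apply, star_trivial]
    rcases eq_or_ne k l with rfl | h
    · simp [symm_entry (hf k).1 i j]
    · simp [h, Ne.symm h]
  · intro x
    simp only [star_trivial]
    rw [blockDiag_qf]
    exact Finset.sum_nonneg fun k _ => qf_nonneg (hf k) _

lemma vecMulVec_psd (v : ι → ℝ) : (Matrix.vecMulVec v v).PosSemidef := by
  refine Matrix.PosSemidef.of_dotProduct_mulVec_nonneg ?_ ?_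
  · ext i j
    simp [Matrix.conjTranspose_apply, Matrix.vecMulVec_apply, mul_comm]
  · intro x
    simp only [star_trivial]
    rw [qf_expand]
    have : ∑ i, ∑ j, x i * Matrix.vecMulVec v v i j * x j = (∑ i, x i * v i) ^ 2 := by
      rw [sq, Finset.sum_mul_sum]
      exact Finset.sum_congr rfl fun i _ => Finset.sum_congr rfl fun j _ => by
        simp [Matrix.vecMulVec_apply]; ring
    rw [this]
    positivity

lemma vecMulVec_trace (v : ι → ℝ) : (Matrix.vecMulVec v v).trace = ∑ i, v i ^ 2 := by
  simp [Matrix.trace, Matrix.diag, Matrix.vecMulVec_apply, sq]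

lemma nucNorm_of_psd {M : Matrix ι ι ℝ} (hM : M.PosSemidef) :
    ((Matrix.posSemidef_conjTranspose_mul_self M).1.eigenvectorUnitary.1 *
    Matrix.diagonal ((RCLike.ofReal : ℝ → ℝ) ∘ Real.sqrt ∘
      (Matrix.posSemidef_conjTranspose_mul_self M).1.eigenvalues) *
    (star (Matrix.posSemidef_conjTranspose_mul_self M).1.eigenvectorUnitary :
      Matrix ι ι ℝ)).trace = M.trace := by
  open scoped MatrixOrder in
  have hMM : Mᴴ * M = M * M := by rw [hM.1.eq]
  have h0 : CFC.sqrt (Mᴴ * M) = M := by rw [hMM]; exact CFC.sqrt_mul_self M hM.nonneg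
  rw [CFC.sqrt_eq_cfc, cfc_nnreal_eq_real _ (Mᴴ * M),
    (Matrix.posSemidef_conjTranspose_mul_self M).1.cfc_eq] at h0
  simp only [IsHermitian.cfc, Real.coe_sqrt, Real.coe_toNNReal', Unitary.conjStarAlgAut_apply] at h0
  have hfun : (RCLike.ofReal : ℝ → ℝ) ∘ Real.sqrt ∘
      (Matrix.posSemidef_conjTranspose_mul_self M).1.eigenvalues =
      (RCLike.ofReal : ℝ → ℝ) ∘ (fun x => √(max x 0)) ∘
      (Matrix.posSemidef_conjTranspose_mul_self M).1.eigenvalues := by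
    funext i
    simp only [Function.comp_apply]
    congr 2
    exact (max_eq_left ((Matrix.posSemidef_conjTranspose_mul_self M).eigenvalues_nonneg i)).symm
  rw [hfun]
  exact congrArg Matrix.trace h0

end blockdiag

section d0
variable {ι κ : Type*} [Fintype ι] [Fintype κ]

lemma vecMulVec_kron_qf [DecidableEq ι] [DecidableEq κ]
    (f g : ι → ℝ) (p q : κ → ℝ) (w : ι × κ → ℝ) :
    w ⬝ᵥ ((Matrix.vecMulVec f g ⊗ₖ Matrix.vecMulVec p q).mulVec w)
      = (∑ x, w x * (f x.1 * p x.2)) * (∑ y, w y * (g y.1 * q y.2)) := by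
  rw [qf_expand2, Finset.sum_mul_sum]
  refine Finset.sum_congr rfl fun x _ => Finset.sum_congr rfl fun y _ => ?_
  simp [Matrix.kroneckerMap_apply, Matrix.vecMulVec_apply]
  ring

lemma sum4_swap {α β γ δ : Type*} [Fintype α] [Fintype β] [Fintype γ] [Fintype δ]
    (f : α → β → γ → δ → ℝ) :
    ∑ a, ∑ b, ∑ c, ∑ d, f a b c d = ∑ c, ∑ d, ∑ a, ∑ b, f a b c d := by
  have h1 : ∀ a, (∑ b, ∑ c, ∑ d, f a b c d) = ∑ c, ∑ d, ∑ b, f a b c d := by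
    intro a
    rw [Finset.sum_comm]
    exact Finset.sum_congr rfl fun c _ => Finset.sum_comm
  simp_rw [h1]
  conv_lhs => rw [Finset.sum_comm]
  exact Finset.sum_congr rfl fun c _ => Finset.sum_comm

end d0


/-- Lemma: `𝔻₀(w)` is positive semidefinite, its nuclear norm is
`wᵀ(B₀ ⊗ A₀)w`, and its supremum over the sphere is `‖B₀‖₂‖A₀‖₂`. -/
theorem D0_psd_nucNorm
    (n m : ℕ) (hn : 0 < n) (hm : 0 < m)
    (A : Matrix (Fin m) (Fin m) ℝ) (B : Matrix (Fin n) (Fin n) ℝ)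
    (Asq : Matrix (Fin m) (Fin m) ℝ) (Bsq : Matrix (Fin n) (Fin n) ℝ)
    (hA : A.PosDef) (hB : B.PosDef)
    (hAsq : Asq.PosDef) (hAsqA : Asq * Asq = A)
    (hBsq : Bsq.PosDef) (hBsqB : Bsq * Bsq = B) :
    (∀ w : Fin n × Fin m → ℝ,
      (D0 (fun i => fun r => Bsq r i) (fun k => fun s => Asq s k) w).PosSemidef) ∧
    (∀ w : Fin n × Fin m → ℝ,
      nucNorm (D0 (fun i => fun r => Bsq r i) (fun k => fun s => Asq s k) w) =
        w ⬝ᵥ ((B ⊗ₖ A).mulVec w)) ∧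
    sSup {x : ℝ | ∃ w : Fin n × Fin m → ℝ, e2 w = 1 ∧
        x = nucNorm (D0 (fun i => fun r => Bsq r i) (fun k => fun s => Asq s k) w)} =
      opNorm B * opNorm A := by
  have : Nonempty (Fin n) := ⟨⟨0, hn⟩⟩
  have : Nonempty (Fin m) := ⟨⟨0, hm⟩⟩
  set U : (Fin n × Fin m → ℝ) → Fin m → Fin n → ℝ :=
    fun w k i => ∑ x : Fin n × Fin m, w x * (Bsq x.1 i * Asq x.2 k) with hU
  have hD0 : ∀ w : Fin n × Fin m → ℝ,
      D0 (fun i => fun r => Bsq r i) (fun k => fun s => Asq s k) w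
        = Matrix.blockDiagonal (fun k => Matrix.vecMulVec (U w k) (U w k)) := by
    intro w
    unfold D0
    refine congrArg Matrix.blockDiagonal (funext fun k => ?_)
    ext i j
    simp only [Matrix.of_apply]
    rw [vecMulVec_kron_qf, Matrix.vecMulVec_apply]
  have hpsd : ∀ w : Fin n × Fin m → ℝ,
      (D0 (fun i => fun r => Bsq r i) (fun k => fun s => Asq s k) w).PosSemidef := by
    intro w
    rw [hD0 w]
    exact blockDiag_psd _ (fun k => vecMulVec_psd _)
  have hnuc : ∀ w : Fin n × Fin m → ℝ,
      nucNorm (D0 (fun i => fun r => Bsq r i) (fun k => fun s => Asq s k) w) =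
        w ⬝ᵥ ((B ⊗ₖ A).mulVec w) := by
    intro w
    unfold nucNorm
    rw [nucNorm_of_psd (hpsd w), hD0 w, Matrix.trace_blockDiagonal]
    have key : ∀ x y : Fin n × Fin m,
        (∑ k, ∑ i, (w x * (Bsq x.1 i * Asq x.2 k)) * (w y * (Bsq y.1 i * Asq y.2 k)))
          = w x * (B x.1 y.1 * A x.2 y.2) * w y := by
      intro x y
      have hB' : B x.1 y.1 = ∑ i, Bsq x.1 i * Bsq y.1 i := by
        rw [← hBsqB, Matrix.mul_apply]
        exact Finset.sum_congr rfl fun i _ => by rw [symm_entry hBsq.1 y.1 i]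
      have hA' : A x.2 y.2 = ∑ k, Asq x.2 k * Asq y.2 k := by
        rw [← hAsqA, Matrix.mul_apply]
        exact Finset.sum_congr rfl fun k _ => by rw [symm_entry hAsq.1 y.2 k]
      rw [hB', hA']
      calc ∑ k, ∑ i, (w x * (Bsq x.1 i * Asq x.2 k)) * (w y * (Bsq y.1 i * Asq y.2 k))
          = ∑ k, (w x * w y * (Asq x.2 k * Asq y.2 k)) * ∑ i, Bsq x.1 i * Bsq y.1 i := by
            refine Finset.sum_congr rfl fun k _ => ?_
            rw [Finset.mul_sum]
            exact Finset.sum_congr rfl fun i _ => by ring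
      _ = (∑ k, w x * w y * (Asq x.2 k * Asq y.2 k)) * ∑ i, Bsq x.1 i * Bsq y.1 i := by
            rw [Finset.sum_mul]
      _ = (w x * w y) * (∑ k, Asq x.2 k * Asq y.2 k) * ∑ i, Bsq x.1 i * Bsq y.1 i := by
            rw [← Finset.mul_sum]
      _ = w x * ((∑ i, Bsq x.1 i * Bsq y.1 i) * ∑ k, Asq x.2 k * Asq y.2 k) * w y := by
            ring
    calc ∑ k, (Matrix.vecMulVec (U w k) (U w k)).trace
        = ∑ k, ∑ i, (U w k i) ^ 2 := Finset.sum_congr rfl fun k _ => vecMulVec_trace _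
    _ = ∑ k, ∑ i, ∑ x, ∑ y,
          (w x * (Bsq x.1 i * Asq x.2 k)) * (w y * (Bsq y.1 i * Asq y.2 k)) := by
        refine Finset.sum_congr rfl fun k _ => Finset.sum_congr rfl fun i _ => ?_
        rw [hU]
        rw [sq, Finset.sum_mul_sum]
    _ = ∑ x, ∑ y, ∑ k, ∑ i,
          (w x * (Bsq x.1 i * Asq x.2 k)) * (w y * (Bsq y.1 i * Asq y.2 k)) := sum4_swap _
    _ = ∑ x, ∑ y, w x * (B x.1 y.1 * A x.2 y.2) * w y :=
        Finset.sum_congr rfl fun x _ => Finset.sum_congr rfl fun y _ => key x y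
    _ = w ⬝ᵥ ((B ⊗ₖ A).mulVec w) := by
        rw [qf_expand2]
        exact Finset.sum_congr rfl fun x _ => Finset.sum_congr rfl fun y _ => by
          rw [Matrix.kroneckerMap_apply]
  refine ⟨hpsd, hnuc, ?_⟩
  have hset : {x : ℝ | ∃ w : Fin n × Fin m → ℝ, e2 w = 1 ∧
      x = nucNorm (D0 (fun i => fun r => Bsq r i) (fun k => fun s => Asq s k) w)}
      = raySet (B ⊗ₖ A) := by
    ext x
    constructor
    · rintro ⟨w, hw, rfl⟩; exact ⟨w, hw, hnuc w⟩
    · rintro ⟨w, hw, rfl⟩; exact ⟨w, hw, (hnuc w).symm⟩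
  rw [hset, ray_kron hB hA, opNorm_eq_ray hB, opNorm_eq_ray hA]
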